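/- For the block 3×3 complex Hermitian matrix 𝒳 = ![![X, θ], ![θᴴ, n]] with X a 2×2 Hermitian block, θ ∈ ℂ² a column, and n ∈ ℝ, one has det 𝒳 = (det X)·n + 2·X⋆(θθᴴ), where X⋆Y := ½(tr(X∘Y) − tr(X)·tr(Y)) and X∘Y = (XY+YX)/2. -/
import Mathlib


open Matrix

/-- The Jordan product on 2×2 complex matrices. -/
noncomputable def jmul (X Y : Matrix (Fin 2) (Fin 2) ℂ) : Matrix (Fin 2) (Fin 2) ℂ :=
  (1 / 2 : ℂ) • (X * Y + Y * X)

/-- The Lorentzian inner product of 2×2 Hermitian matrices. -/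
noncomputable def lprod (X Y : Matrix (Fin 2) (Fin 2) ℂ) : ℂ :=
  ((jmul X Y).trace - X.trace * Y.trace) / 2

theorem det_block_decomposition
    (X : Matrix (Fin 2) (Fin 2) ℂ) (hX : X.IsHermitian) (θ : Fin 2 → ℂ) (n : ℝ) :
    (Matrix.fromBlocks X
        (Matrix.of fun i (_ : Fin 1) => θ i)
        (Matrix.of fun (_ : Fin 1) j => star (θ j))
        (Matrix.of fun (_ : Fin 1) (_ : Fin 1) => (n : ℂ))).det
      = X.det * n + 2 * lprod X (Matrix.of fun i j => θ i * star (θ j)) := by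
  rw [← Matrix.det_reindex_self finSumFinEquiv]
  simp [Matrix.det_fin_three, Matrix.reindex_apply, Matrix.submatrix_apply,
    Matrix.fromBlocks, lprod, jmul, Matrix.trace_fin_two, Matrix.det_fin_two,
    Matrix.mul_apply, Fin.sum_univ_two, finSumFinEquiv, Fin.addCases, Fin.castPred,
    Fin.castLT, show ((0:Fin 3):Fin 2)=0 from rfl]
  ring
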